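/- arXiv:1209.1435 — 2 statements merged into one kernel-verified Lean document; each statement's English description precedes it below -/
import Mathlib

section
/- Let a, r : L → A, R be maps of sets admitting a proper domain cycle (x₀, …, x_{2k+1}). Define γ : {0,1} × L → L as the second projection, descent data ξ^r relative to r by ξ^r_{x,x'}(b,x) = (b,x') for r(x) = r(x'), and descent data ξ^a relative to a by ξ^a_{x₀,x}(b,x₀) = (b,x) if x ≠ x₁ and (1−b,x₁) if x = x₁, extended by ξ^a_{x,x'} = ξ^a_{x₀,x'} ∘ (ξ^a_{x₀,x})^{-1} on the class of x₀ and identity-on-first-coordinate elsewhere. Then ξ^a and ξ^r are valid descent data (satisfy neutrality and associativity), and the composite ξ^r_{x_{2k+1},x₀} ∘ ξ^a_{x_{2k},x_{2k+1}} ∘ ⋯ ∘ ξ^r_{x₁,x₂} ∘ ξ^a_{x₀,x₁} sends (0,x₀) to (1,x₀), hence is not the identity. -/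
open scoped Classical

/-- Descent data in `SET` for `γ` relative to `p`, as a compatible family of maps
between the fibres of `γ`. -/
structure DescentFamily {E B C : Type*} (p : E → B) (γ : C → E) where
  map : ∀ (e e' : E), p e = p e' → {c : C // γ c = e} → {c : C // γ c = e'}
  refl : ∀ e (c : {c : C // γ c = e}), map e e rfl c = c
  comp : ∀ (e e' e'' : E) (h : p e = p e') (h' : p e' = p e'') (c : {c : C // γ c = e}),
    map e' e'' h' (map e e' h c) = map e e'' (h.trans h') c

/-- A domain cycle of `a` and `r` (indices mod `2k+2`). -/
def IsDomainCycle {L A R : Type*} (a : L → A) (r : L → R) (k : ℕ)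
    (x : ZMod (2 * k + 2) → L) : Prop :=
  (∀ j : ZMod (2 * k + 2), x j ≠ x (j + 1)) ∧
  (∀ i : ℕ, i ≤ k →
    a (x ((2 * i : ℕ) : ZMod (2 * k + 2))) = a (x ((2 * i + 1 : ℕ) : ZMod (2 * k + 2)))) ∧
  (∀ i : ℕ, i ≤ k →
    r (x ((2 * i + 1 : ℕ) : ZMod (2 * k + 2))) = r (x ((2 * i + 2 : ℕ) : ZMod (2 * k + 2))))

/-- The composite of the fibre bijections of `ξᵃ` and `ξʳ` along the first `m` steps
of the (cyclically indexed) sequence `z`, starting in the fibre over `z 0` and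
alternating between `ξᵃ` (even steps) and `ξʳ` (odd steps). -/
def chain {L A R : Type*} (a : L → A) (r : L → R) {n : ℕ}
    (ξa : DescentFamily a (Prod.snd : Bool × L → L))
    (ξr : DescentFamily r (Prod.snd : Bool × L → L))
    (z : ZMod n → L)
    (hstep : ∀ m : ℕ, (Even m → a (z (m : ℕ)) = a (z ((m + 1 : ℕ)))) ∧
      (¬ Even m → r (z (m : ℕ)) = r (z ((m + 1 : ℕ))))) :
    ∀ m : ℕ, {c : Bool × L // c.2 = z ((0 : ℕ) : ZMod n)} →
      {c : Bool × L // c.2 = z ((m : ℕ) : ZMod n)}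
  | 0 => id
  | (m + 1) => fun c =>
      if h : Even m then
        ξa.map (z (m : ℕ)) (z ((m + 1 : ℕ))) ((hstep m).1 h) (chain a r ξa ξr z hstep m c)
      else
        ξr.map (z (m : ℕ)) (z ((m + 1 : ℕ))) ((hstep m).2 h) (chain a r ξa ξr z hstep m c)

/-- Auxiliary descent data relative to `r`: identity on the `Bool` component. -/
noncomputable def xiR {L A R : Type*} (a : L → A) (r : L → R) :
    DescentFamily r (Prod.snd : Bool × L → L) where
  map e e' _ c := ⟨(c.1.1, e'), rfl⟩
  refl := by rintro e ⟨⟨b, y⟩, rfl⟩; rfl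
  comp := by intros; rfl

/-- Auxiliary descent data relative to `a`: flips the `Bool` component according to
whether the endpoints equal a marked point `z1`. -/
noncomputable def xiA {L A R : Type*} (a : L → A) (r : L → R) (z1 : L) :
    DescentFamily a (Prod.snd : Bool × L → L) where
  map e e' _ c :=
    ⟨((c.1.1 ^^ (if e = z1 then true else false)) ^^ (if e' = z1 then true else false), e'), rfl⟩
  refl := by
    rintro e ⟨⟨b, y⟩, rfl⟩
    apply Subtype.ext
    simp [Bool.xor_assoc]
  comp := by
    rintro e e' e'' h h' ⟨⟨b, y⟩, rfl⟩
    apply Subtype.ext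
    simp [Bool.xor_assoc]

lemma xiA_map_eq {L A R : Type*} (a : L → A) (r : L → R) (z1 : L) (e e' : L)
    (h : a e = a e') (c : {c : Bool × L // c.2 = e}) :
    ((xiA a r z1).map e e' h c : Bool × L) =
      ((c.1.1 ^^ (if e = z1 then true else false)) ^^ (if e' = z1 then true else false), e') :=
  rfl

lemma xiR_map_eq {L A R : Type*} (a : L → A) (r : L → R) (e e' : L)
    (h : r e = r e') (c : {c : Bool × L // c.2 = e}) :
    ((xiR a r).map e e' h c : Bool × L) = (c.1.1, e') :=
  rfl

/-- given a proper domain cycle `(x₀, …, x_{2k+1})` of `a` and `r`,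
with `γ : Bool × L → L` the second projection there are descent data `ξʳ` relative to
`r` acting identically on the `Bool` component, and `ξᵃ` relative to `a` acting
identically on the `Bool` component except for swapping it on the pair `(x₀, x₁)`,
such that the composite of the fibre bijections around the cycle sends `(false, x₀)`
to `(true, x₀)` — hence is not the identity. -/
theorem proper_cycle_noncoherent_descent_data {L A R : Type*} (a : L → A) (r : L → R)
    (k : ℕ) (z : ZMod (2 * k + 2) → L)
    (hz : IsDomainCycle a r k z) (hproper : Function.Injective z) :
    ∃ (ξa : DescentFamily a (Prod.snd : Bool × L → L))
      (ξr : DescentFamily r (Prod.snd : Bool × L → L)),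
      (∀ (x x' : L) (h : r x = r x') (b : Bool),
        (ξr.map x x' h ⟨(b, x), rfl⟩ : Bool × L) = (b, x')) ∧
      (∀ (y : L) (h : a (z ((0 : ℕ) : ZMod (2 * k + 2))) = a y) (b : Bool),
        (ξa.map (z ((0 : ℕ) : ZMod (2 * k + 2))) y h ⟨(b, z ((0 : ℕ) : ZMod (2 * k + 2))), rfl⟩ : Bool × L) =
          if y = z ((1 : ℕ) : ZMod (2 * k + 2)) then (!b, y) else (b, y)) ∧
      (∀ (y y' : L) (h : a y = a y'), a y ≠ a (z ((0 : ℕ) : ZMod (2 * k + 2))) →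
        ∀ b : Bool, (ξa.map y y' h ⟨(b, y), rfl⟩ : Bool × L) = (b, y')) ∧
      (∀ hstep : ∀ m : ℕ, (Even m → a (z (m : ℕ)) = a (z ((m + 1 : ℕ)))) ∧
          (¬ Even m → r (z (m : ℕ)) = r (z ((m + 1 : ℕ)))),
        (chain a r ξa ξr z hstep (2 * k + 2)
            ⟨(false, z ((0 : ℕ) : ZMod (2 * k + 2))), rfl⟩ : Bool × L) =
          (true, z ((0 : ℕ) : ZMod (2 * k + 2)))) := by
  classical
  have hkn : 1 < 2 * k + 2 := by omega
  have hcast : ∀ m m' : ℕ, m < 2 * k + 2 → m' < 2 * k + 2 →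
      z ((m : ℕ) : ZMod (2 * k + 2)) = z ((m' : ℕ) : ZMod (2 * k + 2)) → m = m' := by
    intro m m' hm hm' h
    have h2 := congrArg ZMod.val (hproper h)
    rwa [ZMod.val_natCast_of_lt hm, ZMod.val_natCast_of_lt hm'] at h2
  have hz01 : z ((0 : ℕ) : ZMod (2 * k + 2)) ≠ z ((1 : ℕ) : ZMod (2 * k + 2)) := by
    intro h
    exact absurd (hcast 0 1 (by omega) hkn h) (by omega)
  have ha01 : a (z ((0 : ℕ) : ZMod (2 * k + 2))) = a (z ((1 : ℕ) : ZMod (2 * k + 2))) := by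
    have := hz.2.1 0 (Nat.zero_le k)
    simpa using this
  refine ⟨xiA a r (z ((1 : ℕ) : ZMod (2 * k + 2))), xiR a r, ?_, ?_, ?_, ?_⟩
  · intro x x' h b
    rw [xiR_map_eq]
  · intro y h b
    rw [xiA_map_eq, if_neg hz01]
    by_cases hy : y = z ((1 : ℕ) : ZMod (2 * k + 2))
    · rw [if_pos hy, if_pos hy]; simp
    · rw [if_neg hy, if_neg hy]; simp
  · intro y y' h hne b
    have hy : y ≠ z ((1 : ℕ) : ZMod (2 * k + 2)) := by
      intro hy; exact hne (by rw [hy, ← ha01])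
    have hy' : y' ≠ z ((1 : ℕ) : ZMod (2 * k + 2)) := by
      intro hy'; rw [hy', ← ha01] at h; exact hne h
    rw [xiA_map_eq, if_neg hy, if_neg hy']
    simp
  · intro hstep
    have key : ∀ m : ℕ, 1 ≤ m → m ≤ 2 * k + 2 →
        (chain a r (xiA a r (z ((1 : ℕ) : ZMod (2 * k + 2)))) (xiR a r) z hstep m
          ⟨(false, z ((0 : ℕ) : ZMod (2 * k + 2))), rfl⟩ : Bool × L) =
          (true, z ((m : ℕ) : ZMod (2 * k + 2))) := by
      intro m
      induction m with
      | zero => intro h; omega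
      | succ m ih =>
        intro _ hm1
        by_cases hme : Even m
        · -- ξa step
          simp only [chain, dif_pos hme, xiA_map_eq]
          rcases Nat.eq_zero_or_pos m with h0 | h0
          · subst h0
            have hb : ((chain a r (xiA a r (z ((1 : ℕ) : ZMod (2 * k + 2)))) (xiR a r) z hstep 0
                ⟨(false, z ((0 : ℕ) : ZMod (2 * k + 2))), rfl⟩ : Bool × L)).1 = false := rfl
            rw [hb, if_neg hz01, if_pos rfl]
            simp
          · have hm2 : 2 ≤ m := by
              rcases hme with ⟨j, hj⟩; omega
            have hzm : z ((m : ℕ) : ZMod (2 * k + 2)) ≠ z ((1 : ℕ) : ZMod (2 * k + 2)) := by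
              intro h; have := hcast m 1 (by omega) hkn h; omega
            have hzm1 : z ((m + 1 : ℕ) : ZMod (2 * k + 2)) ≠ z ((1 : ℕ) : ZMod (2 * k + 2)) := by
              intro h
              have hmn : m + 1 < 2 * k + 2 := by
                rcases hme with ⟨j, hj⟩; omega
              have := hcast (m + 1) 1 hmn hkn h; omega
            have hb := congrArg Prod.fst (ih h0 (by omega))
            rw [hb, if_neg hzm, if_neg hzm1]
            simp
        · -- ξr step
          have h0 : 1 ≤ m := by
            rcases Nat.eq_zero_or_pos m with h0 | h0
            · exact absurd (h0 ▸ Even.zero) hme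
            · exact h0
          simp only [chain, dif_neg hme, xiR_map_eq]
          have hb := congrArg Prod.fst (ih h0 (by omega))
          rw [hb]
    have h := key (2 * k + 2) (by omega) le_rfl
    have hzn : z (((2 * k + 2 : ℕ)) : ZMod (2 * k + 2)) = z ((0 : ℕ) : ZMod (2 * k + 2)) := by
      congr 1
      simp
    rw [h, hzn]
end

section
/- Let a : L → A and r : L → R be maps of sets, s : L → S with ker(s) the equivalence relation generated by ker(a) ∪ ker(r), and suppose a and r have no domain cycles. Given descent data ξ^τ relative to a and ξ^β relative to r for a common γ : I → L, for any alternating sequence (y₀, …, y_m) (consecutive pairs alternately in ker(a) and ker(r)) the composite bijection ξ_σ : γ⁻¹(y₀) → γ⁻¹(y_m) built by composing the corresponding components of ξ^τ and ξ^β depends only on (y₀, y_m) and not on the chosen alternating sequence; hence ξ^τ and ξ^β extend to a unique common descent data relative to s. -/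
open scoped Classical

namespace DescentFamily
variable {E B C : Type*} {p : E → B} {γ : C → E}

lemma map_self (ξ : DescentFamily p γ) (e : E) (h : p e = p e) (c : {c : C // γ c = e}) :
    ξ.map e e h c = c := ξ.refl e c

lemma map_base_eq (ξ : DescentFamily p γ) {e e' : E} (he : e = e') (h : p e = p e')
    (c : {x : C // γ x = e}) : ((ξ.map e e' h c : {x : C // γ x = e'}) : C) = c := by
  subst he; rw [ξ.map_self]

/-- The relation on `C` induced by a descent family. -/
def relc (ξ : DescentFamily p γ) (c c' : C) : Prop :=
  ∃ h : p (γ c) = p (γ c'), ((ξ.map (γ c) (γ c') h ⟨c, rfl⟩ : {x : C // γ x = γ c'}) : C) = c'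

lemma relc_refl (ξ : DescentFamily p γ) (c : C) : ξ.relc c c :=
  ⟨rfl, by rw [ξ.map_self]⟩

lemma relc_symm (ξ : DescentFamily p γ) {c c' : C} (h : ξ.relc c c') : ξ.relc c' c := by
  obtain ⟨h, hm⟩ := h
  have hd : ξ.map (γ c) (γ c') h ⟨c, rfl⟩ = ⟨c', rfl⟩ := Subtype.ext hm
  refine ⟨h.symm, ?_⟩
  have hcomp := ξ.comp (γ c) (γ c') (γ c) h h.symm ⟨c, rfl⟩
  rw [hd, ξ.map_self] at hcomp
  exact congrArg Subtype.val hcomp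

lemma relc_trans (ξ : DescentFamily p γ) {c c' c'' : C} (h1 : ξ.relc c c') (h2 : ξ.relc c' c'') :
    ξ.relc c c'' := by
  obtain ⟨h1, hm1⟩ := h1
  obtain ⟨h2, hm2⟩ := h2
  refine ⟨h1.trans h2, ?_⟩
  have hd : ξ.map (γ c) (γ c') h1 ⟨c, rfl⟩ = ⟨c', rfl⟩ := Subtype.ext hm1
  have hcomp := ξ.comp (γ c) (γ c') (γ c'') h1 h2 ⟨c, rfl⟩
  rw [hd] at hcomp
  rw [← hcomp]
  exact hm2

lemma relc_base_eq (ξ : DescentFamily p γ) {c c' : C} (h : ξ.relc c c') (hb : γ c = γ c') :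
    c = c' := by
  obtain ⟨h, hm⟩ := h
  rw [ξ.map_base_eq hb] at hm
  exact hm

lemma relc_map (ξ : DescentFamily p γ) {e' : E} {c : C} (h : p (γ c) = p e') :
    ξ.relc c (ξ.map (γ c) e' h ⟨c, rfl⟩ : {x : C // γ x = e'}) := by
  rcases hde : ξ.map (γ c) e' h ⟨c, rfl⟩ with ⟨d, hd⟩
  subst hd
  exact ⟨h, by rw [hde]⟩

lemma relc_map' (ξ : DescentFamily p γ) {e e' : E} (h : p e = p e') (c : {x : C // γ x = e}) :
    ξ.relc (c : C) (ξ.map e e' h c : {x : C // γ x = e'}) := by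
  obtain ⟨c, hc⟩ := c
  subst hc
  exact ξ.relc_map h

end DescentFamily

/-- `a` and `r` have no domain cycle. -/
def SeparatedKernels {L A R : Type*} (a : L → A) (r : L → R) : Prop :=
  ¬ ∃ (k : ℕ) (x : ZMod (2 * k + 2) → L), IsDomainCycle a r k x

lemma mkCycle {L A R : Type*} {a : L → A} {r : L → R} (hsep : SeparatedKernels a r)
    (k : ℕ) (y : ℕ → L)
    (hd : ∀ j < 2 * k + 2, y j ≠ y (j + 1))
    (hw : y (2 * k + 2) = y 0)
    (ha : ∀ i ≤ k, a (y (2 * i)) = a (y (2 * i + 1)))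
    (hr : ∀ i ≤ k, r (y (2 * i + 1)) = r (y (2 * i + 2))) : False := by
  apply hsep
  haveI : NeZero (2 * k + 2) := ⟨by omega⟩
  haveI : Fact (1 < 2 * k + 2) := ⟨by omega⟩
  refine ⟨k, fun j => y j.val, ?_, ?_, ?_⟩
  · intro j
    show y j.val ≠ y (j + 1).val
    have hjv : j.val < 2 * k + 2 := ZMod.val_lt j
    have hadd : (j + 1).val = (j.val + 1) % (2 * k + 2) := by
      rw [ZMod.val_add, ZMod.val_one]
    by_cases hcase : j.val + 1 < 2 * k + 2
    · rw [hadd, Nat.mod_eq_of_lt hcase]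
      exact hd j.val hjv
    · have hj : j.val + 1 = 2 * k + 2 := by omega
      rw [hadd, hj, Nat.mod_self]
      have := hd j.val hjv
      rw [hj, hw] at this
      exact this
  · intro i hi
    show a (y ((2 * i : ℕ) : ZMod (2 * k + 2)).val) = a (y ((2 * i + 1 : ℕ) : ZMod (2 * k + 2)).val)
    rw [ZMod.val_cast_of_lt (by omega : 2 * i < 2 * k + 2),
      ZMod.val_cast_of_lt (by omega : 2 * i + 1 < 2 * k + 2)]
    exact ha i hi
  · intro i hi
    show r (y ((2 * i + 1 : ℕ) : ZMod (2 * k + 2)).val) = r (y ((2 * i + 2 : ℕ) : ZMod (2 * k + 2)).val)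
    rw [ZMod.val_cast_of_lt (by omega : 2 * i + 1 < 2 * k + 2)]
    by_cases hcase : i < k
    · rw [ZMod.val_cast_of_lt (by omega : 2 * i + 2 < 2 * k + 2)]
      exact hr i hi
    · have hik : i = k := by omega
      subst hik
      have h0 : ((2 * i + 2 : ℕ) : ZMod (2 * i + 2)) = 0 := ZMod.natCast_self _
      rw [h0]
      show r (y (2 * i + 1)) = r (y (0 : ZMod (2 * i + 2)).val)
      rw [ZMod.val_zero, ← hw]
      exact hr i le_rfl

section Walks
variable {L A R I : Type*} {a : L → A} {r : L → R} {γ : I → L}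

/-- One step of a mixed walk: `t = true` is a `ξτ`-step, `t = false` a `ξβ`-step. -/
def WStep (ξτ : DescentFamily a γ) (ξβ : DescentFamily r γ) (t : Bool) (u v : I) : Prop :=
  if t then ξτ.relc u v else ξβ.relc u v

/-- A mixed walk of length `N` with step types `t`. -/
def GWalk (ξτ : DescentFamily a γ) (ξβ : DescentFamily r γ) (N : ℕ) (t : ℕ → Bool)
    (c : ℕ → I) : Prop :=
  ∀ i < N, WStep ξτ ξβ (t i) (c i) (c (i + 1))

variable {ξτ : DescentFamily a γ} {ξβ : DescentFamily r γ}

lemma WStep.base_eq {t : Bool} {u v : I} (hst : WStep ξτ ξβ t u v) (hb : γ u = γ v) : u = v := by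
  cases t
  · exact ξβ.relc_base_eq (by simpa [WStep] using hst) hb
  · exact ξτ.relc_base_eq (by simpa [WStep] using hst) hb

lemma WStep.trans {t : Bool} {u v w : I} (h1 : WStep ξτ ξβ t u v) (h2 : WStep ξτ ξβ t v w) :
    WStep ξτ ξβ t u w := by
  cases t
  · simp only [WStep, Bool.false_eq_true, if_false] at *
    exact ξβ.relc_trans h1 h2
  · simp only [WStep, if_true] at *
    exact ξτ.relc_trans h1 h2

lemma WStep.symm {t : Bool} {u v : I} (h : WStep ξτ ξβ t u v) : WStep ξτ ξβ t v u := by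
  cases t
  · simp only [WStep, Bool.false_eq_true, if_false] at *
    exact ξβ.relc_symm h
  · simp only [WStep, if_true] at *
    exact ξτ.relc_symm h

lemma rot_aux {B' : Type*} {p : L → B'} (ξ : DescentFamily p γ) {u v w z : I}
    (h1 : ξ.relc u v) (h2 : ξ.relc w z) (hb : γ u = γ z) (hne : u ≠ z) :
    ∃ e : I, γ e = γ w ∧ ξ.relc e v ∧ e ≠ w := by
  obtain ⟨hz, -⟩ := ξ.relc_symm h2
  have h' : p (γ u) = p (γ w) := by rw [hb]; exact hz
  refine ⟨(ξ.map (γ u) (γ w) h' ⟨u, rfl⟩ : {x : I // γ x = γ w}),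
    (ξ.map (γ u) (γ w) h' ⟨u, rfl⟩).2, ?_, ?_⟩
  · exact ξ.relc_trans (ξ.relc_symm (ξ.relc_map h')) h1
  · intro he
    have hrel : ξ.relc u w := he ▸ ξ.relc_map h'
    exact hne (ξ.relc_base_eq (ξ.relc_trans hrel h2) hb)

lemma gwalk_closed (hsep : SeparatedKernels a r) :
    ∀ N : ℕ, ∀ t : ℕ → Bool, ∀ c : ℕ → I, GWalk ξτ ξβ N t c → γ (c 0) = γ (c N) → c 0 = c N := by
  intro N
  induction N using Nat.strong_induction_on with
  | _ N IH =>
  match N with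
  | 0 => intro t c _ _; rfl
  | (N' + 1) =>
    intro t c hw hb
    by_cases hA : ∃ i, i < N' + 1 ∧ γ (c i) = γ (c (i + 1))
    · -- delete a base-trivial step
      obtain ⟨i, hiN, hbase⟩ := hA
      have hcc : c i = c (i + 1) := (hw i hiN).base_eq hbase
      have hw2 : GWalk ξτ ξβ N' (fun j => if j < i then t j else t (j + 1))
          (fun j => if j ≤ i then c j else c (j + 1)) := by
        intro j hj
        rcases lt_trichotomy j i with hji | hji | hji
        · simpa only [if_pos (le_of_lt hji), if_pos hji, if_pos (Nat.succ_le_of_lt hji)]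
            using hw j (by omega)
        · subst hji
          simp only [if_pos (le_refl j), if_neg (by omega : ¬ j + 1 ≤ j),
            if_neg (lt_irrefl j)]
          rw [hcc]
          exact hw (j + 1) (by omega)
        · simp only [if_neg (by omega : ¬ j ≤ i), if_neg (by omega : ¬ j + 1 ≤ i),
            if_neg (by omega : ¬ j < i)]
          exact hw (j + 1) (by omega)
      have hend : (if N' ≤ i then c N' else c (N' + 1)) = c (N' + 1) := by
        by_cases hN : N' ≤ i
        · have hiN' : i = N' := by omega
          subst hiN'
          rw [if_pos hN]
          exact hcc
        · rw [if_neg hN]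
      have h0 : (if (0:ℕ) ≤ i then c 0 else c (0 + 1)) = c 0 := if_pos (Nat.zero_le i)
      have := IH N' (by omega) _ _ hw2 (by rw [h0, hend]; exact hb)
      rw [h0, hend] at this
      exact this
    · push_neg at hA
      by_cases hB : ∃ i, i + 1 < N' + 1 ∧ t i = t (i + 1)
      · -- merge two consecutive steps of the same type
        obtain ⟨i, hiN, hti⟩ := hB
        have hw2 : GWalk ξτ ξβ N' (fun j => if j ≤ i then t j else t (j + 1))
            (fun j => if j ≤ i then c j else c (j + 1)) := by
          intro j hj
          rcases lt_trichotomy j i with hji | hji | hji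
          · simpa only [if_pos (le_of_lt hji), if_pos hji, if_pos (Nat.succ_le_of_lt hji)]
              using hw j (by omega)
          · subst hji
            simp only [if_pos (le_refl j), if_neg (by omega : ¬ j + 1 ≤ j)]
            exact (hw j (by omega)).trans (hti ▸ hw (j + 1) (by omega))
          · simp only [if_neg (by omega : ¬ j ≤ i), if_neg (by omega : ¬ j + 1 ≤ i)]
            exact hw (j + 1) (by omega)
        have hend : (if N' ≤ i then c N' else c (N' + 1)) = c (N' + 1) := by
          rw [if_neg (by omega : ¬ N' ≤ i)]
        have h0 : (if (0:ℕ) ≤ i then c 0 else c (0 + 1)) = c 0 := if_pos (Nat.zero_le i)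
        have := IH N' (by omega) _ _ hw2 (by rw [h0, hend]; exact hb)
        rw [h0, hend] at this
        exact this
      · push_neg at hB
        -- the walk is strictly alternating with no base-trivial step
        have hpar : ∀ i ≤ N', t i = if i % 2 = 0 then t 0 else !(t 0) := by
          intro i hi
          induction i with
          | zero => simp
          | succ n ihn =>
            have hn := ihn (by omega)
            have hne : t n ≠ t (n + 1) := hB n (by omega)
            have hstep : t (n + 1) = !(t n) := by
              cases h1 : t n <;> cases h2 : t (n + 1) <;> simp_all
            by_cases hpar2 : n % 2 = 0
            · have h1 : ¬ ((n + 1) % 2 = 0) := by omega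
              rw [hstep, hn, if_pos hpar2, if_neg h1]
            · have h1 : (n + 1) % 2 = 0 := by omega
              rw [hstep, hn, if_neg hpar2, if_pos h1, Bool.not_not]
        rcases Nat.eq_zero_or_pos N' with hN0 | hNpos
        · subst hN0
          exact absurd hb (hA 0 (by omega))
        by_cases hJ : t 0 = t N'
        · -- rotate the walk
          by_cases hEq : c 0 = c (N' + 1)
          · exact hEq
          have s0 := hw 0 (by omega)
          have sL := hw N' (by omega)
          rw [hJ] at s0
          have key : ∃ e : I, γ e = γ (c N') ∧ WStep ξτ ξβ (t N') e (c 1) ∧ e ≠ c N' := by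
            cases hb0 : t N'
            · rw [hb0] at s0 sL
              simp only [WStep, Bool.false_eq_true, if_false] at s0 sL ⊢
              exact rot_aux ξβ s0 sL hb hEq
            · rw [hb0] at s0 sL
              simp only [WStep, if_true] at s0 sL ⊢
              exact rot_aux ξτ s0 sL hb hEq
          obtain ⟨e, hge, hrel, hne⟩ := key
          have hw2 : GWalk ξτ ξβ N' t (fun j => if j = 0 then e else c j) := by
            intro j hj
            rcases Nat.eq_zero_or_pos j with hj0 | hjpos
            · subst hj0
              simp only [if_pos rfl, if_neg (by omega : ¬ (0:ℕ) + 1 = 0)]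
              rw [hJ]
              exact hrel
            · simp only [if_neg (by omega : ¬ j = 0), if_neg (by omega : ¬ j + 1 = 0)]
              exact hw j (by omega)
          have hclosed : γ (if (0:ℕ) = 0 then e else c 0) = γ (if N' = 0 then e else c N') := by
            rw [if_pos rfl, if_neg (by omega : ¬ N' = 0)]
            exact hge
          have := IH N' (by omega) _ _ hw2 hclosed
          rw [if_pos rfl, if_neg (by omega : ¬ N' = 0)] at this
          exact absurd this hne
        · -- extract a domain cycle
          exfalso
          have hNodd : N' % 2 = 1 := by
            by_contra hodd
            have := hpar N' le_rfl
            rw [if_pos (by omega)] at this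
            exact hJ this.symm
          obtain ⟨k, hk⟩ : ∃ k, N' = 2 * k + 1 := ⟨N' / 2, by omega⟩
          subst hk
          have hstepτ : ∀ i < 2 * k + 2, t i = true → a (γ (c i)) = a (γ (c (i + 1))) := by
            intro i hi hti
            have := hw i hi
            rw [hti] at this
            simp only [WStep, if_true] at this
            exact this.1
          have hstepβ : ∀ i < 2 * k + 2, t i = false → r (γ (c i)) = r (γ (c (i + 1))) := by
            intro i hi hti
            have := hw i hi
            rw [hti] at this
            simp only [WStep, Bool.false_eq_true, if_false] at this
            exact this.1
          have hb' : γ (c 0) = γ (c (2 * k + 2)) := hb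
          cases hb0 : t 0
          · -- first step is a β-step: use the shifted sequence
            have htodd : ∀ i, i % 2 = 1 → i ≤ 2 * k + 1 → t i = true := by
              intro i hi hile
              rw [hpar i hile, if_neg (by omega), hb0, Bool.not_false]
            have hteven : ∀ i, i % 2 = 0 → i ≤ 2 * k + 1 → t i = false := by
              intro i hi hile
              rw [hpar i hile, if_pos hi, hb0]
            set y : ℕ → L := fun m => if m + 1 < 2 * k + 2 then γ (c (m + 1))
              else if m + 1 = 2 * k + 2 then γ (c 0) else γ (c 1) with hy
            have hyval1 : ∀ m, m + 1 < 2 * k + 2 → y m = γ (c (m + 1)) := by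
              intro m hm
              show (if m + 1 < 2 * k + 2 then γ (c (m + 1))
                else if m + 1 = 2 * k + 2 then γ (c 0) else γ (c 1)) = γ (c (m + 1))
              rw [if_pos hm]
            have hyval2 : y (2 * k + 1) = γ (c 0) := by
              show (if 2 * k + 1 + 1 < 2 * k + 2 then γ (c (2 * k + 1 + 1))
                else if 2 * k + 1 + 1 = 2 * k + 2 then γ (c 0) else γ (c 1)) = γ (c 0)
              rw [if_neg (by omega : ¬ 2 * k + 1 + 1 < 2 * k + 2),
                if_pos (by omega : 2 * k + 1 + 1 = 2 * k + 2)]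
            have hyval3 : ∀ m, 2 * k + 2 ≤ m → y m = γ (c 1) := by
              intro m hm
              show (if m + 1 < 2 * k + 2 then γ (c (m + 1))
                else if m + 1 = 2 * k + 2 then γ (c 0) else γ (c 1)) = γ (c 1)
              rw [if_neg (by omega : ¬ m + 1 < 2 * k + 2), if_neg (by omega : ¬ m + 1 = 2 * k + 2)]
            apply mkCycle hsep k y
            · intro m hm
              by_cases h1 : m + 2 < 2 * k + 2
              · rw [hyval1 m (by omega), hyval1 (m + 1) (by omega)]
                exact hA (m + 1) (by omega)
              · by_cases h2 : m + 2 = 2 * k + 2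
                · have hm2 : m = 2 * k := by omega
                  subst hm2
                  rw [hyval1 (2 * k) (by omega), hyval2]
                  intro hcon
                  exact hA (2 * k + 1) (by omega) (hcon.trans hb')
                · have hm3 : m = 2 * k + 1 := by omega
                  subst hm3
                  rw [hyval2, hyval3 (2 * k + 1 + 1) (by omega)]
                  exact hA 0 (by omega)
            · rw [hyval3 (2 * k + 2) le_rfl, hyval1 0 (by omega)]
            · intro i hi
              by_cases h1 : i < k
              · rw [hyval1 (2 * i) (by omega), hyval1 (2 * i + 1) (by omega)]
                exact hstepτ (2 * i + 1) (by omega) (htodd (2 * i + 1) (by omega) (by omega))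
              · have h2 : i = k := by omega
                subst h2
                rw [hyval1 (2 * i) (by omega)]
                have hy2 : y (2 * i + 1) = γ (c 0) := hyval2
                rw [hy2]
                have := hstepτ (2 * i + 1) (by omega) (htodd (2 * i + 1) (by omega) (by omega))
                exact this.trans (congrArg a hb'.symm)
            · intro i hi
              by_cases h1 : i < k
              · rw [hyval1 (2 * i + 1) (by omega), hyval1 (2 * i + 2) (by omega)]
                exact hstepβ (2 * i + 2) (by omega) (hteven (2 * i + 2) (by omega) (by omega))
              · have h2 : i = k := by omega
                subst h2
                have hy2 : y (2 * i + 1) = γ (c 0) := hyval2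
                rw [hy2, hyval3 (2 * i + 2) (by omega)]
                exact hstepβ 0 (by omega) (hteven 0 (by omega) (by omega))
          · -- first step is a τ-step: use the sequence itself
            have hteven : ∀ i, i % 2 = 0 → i ≤ 2 * k + 1 → t i = true := by
              intro i hi hile
              rw [hpar i hile, if_pos hi, hb0]
            have htodd : ∀ i, i % 2 = 1 → i ≤ 2 * k + 1 → t i = false := by
              intro i hi hile
              rw [hpar i hile, if_neg (by omega), hb0, Bool.not_true]
            apply mkCycle hsep k (fun m => γ (c m))
            · intro m hm
              exact hA m (by omega)
            · exact hb'.symm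
            · intro i hi
              exact hstepτ (2 * i) (by omega) (hteven (2 * i) (by omega) (by omega))
            · intro i hi
              exact hstepβ (2 * i + 1) (by omega) (htodd (2 * i + 1) (by omega) (by omega))

end Walks

section Extend
variable {L A R I : Type*} {a : L → A} {r : L → R} {γ : I → L}

/-- The union of the relations induced by the two descent families. -/
def URel (ξτ : DescentFamily a γ) (ξβ : DescentFamily r γ) (c c' : I) : Prop :=
  ξτ.relc c c' ∨ ξβ.relc c c'

variable (ξτ : DescentFamily a γ) (ξβ : DescentFamily r γ)

lemma urel_symm : Symmetric (URel ξτ ξβ) := fun _ _ h =>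
  h.elim (fun h => Or.inl (ξτ.relc_symm h)) (fun h => Or.inr (ξβ.relc_symm h))

lemma rtg_to_gwalk {d d' : I} (h : Relation.ReflTransGen (URel ξτ ξβ) d d') :
    ∃ N t c, GWalk ξτ ξβ N t c ∧ c 0 = d ∧ c N = d' := by
  induction h with
  | refl =>
    exact ⟨0, fun _ => true, fun _ => d, fun i hi => absurd hi (Nat.not_lt_zero i), rfl, rfl⟩
  | @tail u v hab hbc ih =>
    obtain ⟨N, t, c, hw, h0, hN⟩ := ih
    rcases hbc with hτ | hβ
    · refine ⟨N + 1, fun i => if i < N then t i else true,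
        fun i => if i ≤ N then c i else v, ?_, ?_, ?_⟩
      · intro i hi
        by_cases hiN : i < N
        · simpa only [if_pos hiN, if_pos (le_of_lt hiN), if_pos (Nat.succ_le_of_lt hiN)]
            using hw i hiN
        · have hieq : i = N := by omega
          subst hieq
          simp only [if_neg (lt_irrefl i), if_pos (le_refl i), if_neg (by omega : ¬ i + 1 ≤ i)]
          show WStep ξτ ξβ true (c i) v
          simp only [WStep, if_true]
          rw [hN]
          exact hτ
      · simp only [if_pos (Nat.zero_le N)]; exact h0
      · simp only [if_neg (by omega : ¬ N + 1 ≤ N)]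
    · refine ⟨N + 1, fun i => if i < N then t i else false,
        fun i => if i ≤ N then c i else v, ?_, ?_, ?_⟩
      · intro i hi
        by_cases hiN : i < N
        · simpa only [if_pos hiN, if_pos (le_of_lt hiN), if_pos (Nat.succ_le_of_lt hiN)]
            using hw i hiN
        · have hieq : i = N := by omega
          subst hieq
          simp only [if_neg (lt_irrefl i), if_pos (le_refl i), if_neg (by omega : ¬ i + 1 ≤ i)]
          show WStep ξτ ξβ false (c i) v
          simp only [WStep, Bool.false_eq_true, if_false]
          rw [hN]
          exact hβ
      · simp only [if_pos (Nat.zero_le N)]; exact h0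
      · simp only [if_neg (by omega : ¬ N + 1 ≤ N)]

lemma rtg_closed (hsep : SeparatedKernels a r) {d d' : I}
    (h : Relation.ReflTransGen (URel ξτ ξβ) d d') (hb : γ d = γ d') : d = d' := by
  obtain ⟨N, t, c, hw, h0, hN⟩ := rtg_to_gwalk ξτ ξβ h
  subst h0
  subst hN
  exact gwalk_closed hsep N t c hw hb

theorem rtg_symmetric_of {α : Type*} {r : α → α → Prop} (h : Symmetric r) {x y : α}
    (hxy : Relation.ReflTransGen r x y) : Relation.ReflTransGen r y x :=
  (@Relation.ReflTransGen.stdSymm _ _ ⟨fun _ _ hab => h hab⟩).symm x y hxy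

lemma eqvgen_to_rtg {x y : L} (h : Relation.EqvGen (fun u v => a u = a v ∨ r u = r v) x y) :
    Relation.ReflTransGen (fun u v => a u = a v ∨ r u = r v) x y := by
  induction h with
  | rel x y h => exact Relation.ReflTransGen.single h
  | refl x => exact Relation.ReflTransGen.refl
  | symm x y h ih =>
    exact rtg_symmetric_of
      (fun u v huv => huv.elim (fun h => Or.inl h.symm) (fun h => Or.inr h.symm)) ih
  | trans x y z h1 h2 ih1 ih2 => exact ih1.trans ih2

lemma rtg_to_eqvgen {x y : L} (h : Relation.ReflTransGen (fun u v => a u = a v ∨ r u = r v) x y) :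
    Relation.EqvGen (fun u v => a u = a v ∨ r u = r v) x y := by
  induction h with
  | refl => exact Relation.EqvGen.refl x
  | tail h1 h2 ih => exact Relation.EqvGen.trans _ _ _ ih (Relation.EqvGen.rel _ _ h2)

lemma lift_exists {x x' : L} (h : Relation.ReflTransGen (fun u v => a u = a v ∨ r u = r v) x x')
    (c : I) (hc : γ c = x) :
    ∃ c' : I, γ c' = x' ∧ Relation.ReflTransGen (URel ξτ ξβ) c c' := by
  induction h with
  | refl => exact ⟨c, hc, Relation.ReflTransGen.refl⟩
  | @tail u v h1 h2 ih =>
    obtain ⟨d, hd, hrtg⟩ := ih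
    rcases h2 with ha' | hr'
    · have h' : a (γ d) = a v := by rw [hd]; exact ha'
      exact ⟨(ξτ.map (γ d) v h' ⟨d, rfl⟩ : {z : I // γ z = v}),
        (ξτ.map (γ d) v h' ⟨d, rfl⟩).2, hrtg.tail (Or.inl (ξτ.relc_map h'))⟩
    · have h' : r (γ d) = r v := by rw [hd]; exact hr'
      exact ⟨(ξβ.map (γ d) v h' ⟨d, rfl⟩ : {z : I // γ z = v}),
        (ξβ.map (γ d) v h' ⟨d, rfl⟩).2, hrtg.tail (Or.inr (ξβ.relc_map h'))⟩

end Extend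

section ExtFamily
variable {L A R S I : Type*}

lemma DescentFamily.ext_of_map {E B C : Type*} {p : E → B} {γ : C → E}
    {ξ ξ' : DescentFamily p γ} (h : ξ.map = ξ'.map) : ξ = ξ' := by
  cases ξ
  cases ξ'
  simp only at h
  subst h
  rfl

/-- The common extension of `ξτ` and `ξβ` to descent data relative to `s`. -/
noncomputable def extFamily (a : L → A) (r : L → R) (s : L → S)
    (hker : ∀ x x' : L, s x = s x' ↔
      Relation.EqvGen (fun u v => a u = a v ∨ r u = r v) x x')
    (hsep : SeparatedKernels a r) (γ : I → L)
    (ξτ : DescentFamily a γ) (ξβ : DescentFamily r γ) : DescentFamily s γ where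
  map x x' h c :=
    ⟨(lift_exists ξτ ξβ (eqvgen_to_rtg ((hker x x').mp h)) c.1 c.2).choose,
     (lift_exists ξτ ξβ (eqvgen_to_rtg ((hker x x').mp h)) c.1 c.2).choose_spec.1⟩
  refl e c := by
    apply Subtype.ext
    have spec := (lift_exists ξτ ξβ (eqvgen_to_rtg ((hker e e).mp rfl)) c.1 c.2).choose_spec
    exact (rtg_closed ξτ ξβ hsep spec.2 (by rw [c.2, spec.1])).symm
  comp e e' e'' h h' c := by
    apply Subtype.ext
    have s1 := (lift_exists ξτ ξβ (eqvgen_to_rtg ((hker e e').mp h)) c.1 c.2).choose_spec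
    have s2 := (lift_exists ξτ ξβ (eqvgen_to_rtg ((hker e' e'').mp h'))
      (lift_exists ξτ ξβ (eqvgen_to_rtg ((hker e e').mp h)) c.1 c.2).choose s1.1).choose_spec
    have s3 := (lift_exists ξτ ξβ (eqvgen_to_rtg ((hker e e'').mp (h.trans h'))) c.1 c.2).choose_spec
    exact rtg_closed ξτ ξβ hsep
      ((rtg_symmetric_of (urel_symm ξτ ξβ) (s1.2.trans s2.2)).trans s3.2)
      (by rw [s3.1, s2.1])

end ExtFamily

/-- `y 0, …, y m` is an alternating sequence of `a` and `r`: consecutive pairs lie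
alternately in `ker a` and `ker r`; `b = true` means the sequence starts with a
`ker a`-step, `b = false` that it starts with a `ker r`-step. -/
def AltSeq {L A R : Type*} (a : L → A) (r : L → R) (b : Bool) (m : ℕ) (y : ℕ → L) : Prop :=
  ∀ i < m, if (decide (i % 2 = 0)) = b then a (y i) = a (y (i + 1))
           else r (y i) = r (y (i + 1))

/-- The composite bijection `ξ_σ : γ⁻¹(y 0) → γ⁻¹(y m)` along an alternating
sequence `σ = (y 0, …, y m)`, built from the components of `ξᵗ` and `ξᵝ`. -/
def altChain {L A R I : Type*} (a : L → A) (r : L → R) {γ : I → L}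
    (ξτ : DescentFamily a γ) (ξβ : DescentFamily r γ) (b : Bool) (y : ℕ → L) :
    ∀ m : ℕ, AltSeq a r b m y → {c : I // γ c = y 0} → {c : I // γ c = y m}
  | 0, _ => id
  | (m + 1), hy =>
      (if h : (decide (m % 2 = 0)) = b then
        ξτ.map (y m) (y (m + 1))
          (by have := hy m (Nat.lt_succ_self m); rwa [if_pos h] at this)
      else
        ξβ.map (y m) (y (m + 1))
          (by have := hy m (Nat.lt_succ_self m); rwa [if_neg h] at this)) ∘
      altChain a r ξτ ξβ b y m (fun i hi => hy i (Nat.lt_succ_of_lt hi))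


lemma altChain_rtg {L A R I : Type*} (a : L → A) (r : L → R) {γ : I → L}
    (ξτ : DescentFamily a γ) (ξβ : DescentFamily r γ) (b : Bool) (y : ℕ → L) :
    ∀ (m : ℕ) (hy : AltSeq a r b m y) (c : {c : I // γ c = y 0}),
      Relation.ReflTransGen (URel ξτ ξβ) (c : I) (altChain a r ξτ ξβ b y m hy c : I) := by
  intro m
  induction m with
  | zero => intro hy c; exact Relation.ReflTransGen.refl
  | succ m ih =>
    intro hy c
    simp only [altChain, Function.comp_apply]
    by_cases h : (decide (m % 2 = 0)) = b
    · rw [dif_pos h]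
      exact (ih _ c).tail (Or.inl (ξτ.relc_map' _ _))
    · rw [dif_neg h]
      exact (ih _ c).tail (Or.inr (ξβ.relc_map' _ _))

/-- if `a` and `r` have no domain cycles and `ker s` is the equivalence
relation generated by `ker a ∪ ker r`, then for descent data `ξᵗ` relative to `a` and
`ξᵝ` relative to `r` over a common `γ : I → L`, the composite bijection along an
alternating sequence depends only on the endpoints, and consequently `ξᵗ` and `ξᵝ`
extend to a unique common descent data relative to `s`. -/
theorem alternating_composite_well_defined_and_unique_extension
    {L A R S I : Type*} (a : L → A) (r : L → R) (s : L → S)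
    (hker : ∀ x x' : L, s x = s x' ↔
      Relation.EqvGen (fun u v => a u = a v ∨ r u = r v) x x')
    (hsep : SeparatedKernels a r)
    (γ : I → L) (ξτ : DescentFamily a γ) (ξβ : DescentFamily r γ) :
    (∀ (b b' : Bool) (m n : ℕ) (y y' : ℕ → L)
      (hy : AltSeq a r b m y) (hy' : AltSeq a r b' n y')
      (h0 : y 0 = y' 0) (hm : y m = y' n) (c : I) (hc : γ c = y 0),
        (altChain a r ξτ ξβ b y m hy ⟨c, hc⟩ : I) =
        (altChain a r ξτ ξβ b' y' n hy' ⟨c, hc.trans h0⟩ : I)) ∧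
    (∃! ξ : DescentFamily s γ,
      (∀ (x x' : L) (h : a x = a x'),
        ξ.map x x' ((hker x x').mpr (Relation.EqvGen.rel x x' (Or.inl h))) =
          ξτ.map x x' h) ∧
      (∀ (x x' : L) (h : r x = r x'),
        ξ.map x x' ((hker x x').mpr (Relation.EqvGen.rel x x' (Or.inr h))) =
          ξβ.map x x' h)) := by
  classical
  constructor
  · intro b b' m n y y' hy hy' h0 hm c hc
    have H1 := altChain_rtg a r ξτ ξβ b y m hy ⟨c, hc⟩
    have H2 := altChain_rtg a r ξτ ξβ b' y' n hy' ⟨c, hc.trans h0⟩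
    exact rtg_closed ξτ ξβ hsep
      ((rtg_symmetric_of (urel_symm ξτ ξβ) H1).trans H2)
      (by rw [(altChain a r ξτ ξβ b y m hy ⟨c, hc⟩).2,
        (altChain a r ξτ ξβ b' y' n hy' ⟨c, hc.trans h0⟩).2]; exact hm)
  · refine ⟨extFamily a r s hker hsep γ ξτ ξβ, ⟨?_, ?_⟩, ?_⟩
    · intro x x' h
      funext c
      apply Subtype.ext
      have spec := (lift_exists ξτ ξβ (eqvgen_to_rtg ((hker x x').mp
        ((hker x x').mpr (Relation.EqvGen.rel x x' (Or.inl h))))) c.1 c.2).choose_spec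
      exact rtg_closed ξτ ξβ hsep
        ((rtg_symmetric_of (urel_symm ξτ ξβ) spec.2).trans
          (Relation.ReflTransGen.single (Or.inl (ξτ.relc_map' h c))))
        (((extFamily a r s hker hsep γ ξτ ξβ).map x x'
          ((hker x x').mpr (Relation.EqvGen.rel x x' (Or.inl h))) c).2.trans
          (ξτ.map x x' h c).2.symm)
    · intro x x' h
      funext c
      apply Subtype.ext
      have spec := (lift_exists ξτ ξβ (eqvgen_to_rtg ((hker x x').mp
        ((hker x x').mpr (Relation.EqvGen.rel x x' (Or.inr h))))) c.1 c.2).choose_spec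
      exact rtg_closed ξτ ξβ hsep
        ((rtg_symmetric_of (urel_symm ξτ ξβ) spec.2).trans
          (Relation.ReflTransGen.single (Or.inr (ξβ.relc_map' h c))))
        (((extFamily a r s hker hsep γ ξτ ξβ).map x x'
          ((hker x x').mpr (Relation.EqvGen.rel x x' (Or.inr h))) c).2.trans
          (ξβ.map x x' h c).2.symm)
    · rintro ξ' ⟨hτ', hβ'⟩
      have hdecomp : ∀ {x x' : L}
          (_ : Relation.ReflTransGen (fun u v => a u = a v ∨ r u = r v) x x')
          (h : s x = s x') (c : {z : I // γ z = x}),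
          Relation.ReflTransGen (URel ξτ ξβ) c.1 (ξ'.map x x' h c).1 := by
        intro x x' hrtg
        induction hrtg with
        | refl =>
          intro h c
          rw [ξ'.map_self]
        | @tail u v h1 h2 ih =>
          intro h c
          have hsu : s x = s u := (hker x u).mpr (rtg_to_eqvgen h1)
          have hux : s u = s v := (hker u v).mpr (Relation.EqvGen.rel _ _ h2)
          have hc2 := ξ'.comp x u v hsu hux c
          have hgoal : ξ'.map x v h c = ξ'.map u v hux (ξ'.map x u hsu c) := hc2.symm
          rw [hgoal]
          refine (ih hsu c).trans ?_
          rcases h2 with ha' | hr'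
          · have heq : ξ'.map u v hux (ξ'.map x u hsu c) =
                ξτ.map u v ha' (ξ'.map x u hsu c) :=
              congrFun (hτ' u v ha') (ξ'.map x u hsu c)
            rw [heq]
            exact Relation.ReflTransGen.single (Or.inl (ξτ.relc_map' ha' _))
          · have heq : ξ'.map u v hux (ξ'.map x u hsu c) =
                ξβ.map u v hr' (ξ'.map x u hsu c) :=
              congrFun (hβ' u v hr') (ξ'.map x u hsu c)
            rw [heq]
            exact Relation.ReflTransGen.single (Or.inr (ξβ.relc_map' hr' _))
      apply DescentFamily.ext_of_map
      funext x x' h c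
      apply Subtype.ext
      have spec := (lift_exists ξτ ξβ (eqvgen_to_rtg ((hker x x').mp h)) c.1 c.2).choose_spec
      exact rtg_closed ξτ ξβ hsep
        ((rtg_symmetric_of (urel_symm ξτ ξβ)
          (hdecomp (eqvgen_to_rtg ((hker x x').mp h)) h c)).trans spec.2)
        ((ξ'.map x x' h c).2.trans spec.1.symm)
end
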